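/- Let G = ⟨A * B; [H,K] = 1⟩ be the free product of A and B with commuting subgroups H ≤ A and K ≤ B. Set U = HK, M = ⟨A, U⟩ and N = ⟨B, U⟩ inside G. Then U is isomorphic to the direct product H × K, M is the free product of A and U amalgamated over H, N is the free product of B and U amalgamated over K, and G is the free product of M and N amalgamated over U. -/

import Mathlib

open Monoid

open scoped commutatorElement

variable {A B : Type*} [Group A] [Group B]

/-- The free product of `A` and `B` with commuting subgroups `H ≤ A`, `K ≤ B`:
the quotient of the free product `A * B` by the normal closure of the mutual
commutators `[h, k]`, `h ∈ H`, `k ∈ K`. -/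
abbrev FPComm (H : Subgroup A) (K : Subgroup B) : Type _ :=
  Coprod A B ⧸ Subgroup.normalClosure
    {x : Coprod A B | ∃ h ∈ H, ∃ k ∈ K, x = ⁅(Coprod.inl h : Coprod A B), Coprod.inr k⁆}

/-- The canonical map `A → G`. -/
noncomputable def iaFP (H : Subgroup A) (K : Subgroup B) : A →* FPComm H K :=
  (QuotientGroup.mk' _).comp Coprod.inl

/-- The canonical map `B → G`. -/
noncomputable def ibFP (H : Subgroup A) (K : Subgroup B) : B →* FPComm H K :=
  (QuotientGroup.mk' _).comp Coprod.inr

/-- The subgroup `U = HK` of `G`. -/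
noncomputable def Usub (H : Subgroup A) (K : Subgroup B) : Subgroup (FPComm H K) :=
  H.map (iaFP H K) ⊔ K.map (ibFP H K)

/-- The subgroup `M = ⟨A, U⟩` of `G`. -/
noncomputable def Msub (H : Subgroup A) (K : Subgroup B) : Subgroup (FPComm H K) :=
  (iaFP H K).range ⊔ Usub H K

/-- The subgroup `N = ⟨B, U⟩` of `G`. -/
noncomputable def Nsub (H : Subgroup A) (K : Subgroup B) : Subgroup (FPComm H K) :=
  (ibFP H K).range ⊔ Usub H K

section Aux1

universe u v
variable {A' : Type u} {B' : Type v} [Group A'] [Group B'] (H : Subgroup A') (K : Subgroup B')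

private lemma comm_rel {h : A'} {k : B'} (hh : h ∈ H) (hk : k ∈ K) :
    iaFP H K h * ibFP H K k = ibFP H K k * iaFP H K h := by
  have h1 : (⁅iaFP H K h, ibFP H K k⁆ : FPComm H K) = 1 := by
    have h2 : (⁅iaFP H K h, ibFP H K k⁆ : FPComm H K) =
        (QuotientGroup.mk' _) ⁅(Coprod.inl h : Coprod A' B'), Coprod.inr k⁆ :=
      (map_commutatorElement (QuotientGroup.mk' _) (Coprod.inl h) (Coprod.inr k)).symm
    rw [h2, QuotientGroup.mk'_apply, QuotientGroup.eq_one_iff]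
    exact Subgroup.subset_normalClosure ⟨h, hh, k, hk, rfl⟩
  exact commutatorElement_eq_one_iff_mul_comm.mp h1

/-- The map `H × K → G`, `(h,k) ↦ h k`. -/
private noncomputable def uMap : (↥H × ↥K) →* FPComm H K :=
  MonoidHom.noncommCoprod ((iaFP H K).comp H.subtype) ((ibFP H K).comp K.subtype)
    (fun h k => comm_rel H K h.2 k.2)

private lemma uMap_apply (x : ↥H × ↥K) :
    uMap H K x = iaFP H K x.1 * ibFP H K x.2 := rfl

private lemma uMap_mem (x : ↥H × ↥K) : uMap H K x ∈ Usub H K := by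
  rw [uMap_apply]
  exact mul_mem (Subgroup.mem_sup_left (Subgroup.mem_map_of_mem _ x.1.2))
    (Subgroup.mem_sup_right (Subgroup.mem_map_of_mem _ x.2.2))

private lemma range_uMap : (uMap H K).range = Usub H K := by
  refine le_antisymm ?_ (sup_le ?_ ?_)
  · rintro _ ⟨x, rfl⟩; exact uMap_mem H K x
  · rintro _ ⟨a, ha, rfl⟩
    exact ⟨(⟨a, ha⟩, 1), by simp [uMap_apply]⟩
  · rintro _ ⟨b, hb, rfl⟩
    exact ⟨(1, ⟨b, hb⟩), by simp [uMap_apply]⟩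

/-- Retraction onto `A`. -/
private noncomputable def pA : FPComm H K →* A' :=
  QuotientGroup.lift _ (Coprod.lift (MonoidHom.id A') 1) (by
    intro x hx
    refine (Subgroup.normalClosure_le_normal ?_ hx :
      x ∈ (Coprod.lift (MonoidHom.id A') 1).ker)
    rintro _ ⟨h, hh, k, hk, rfl⟩
    simp [MonoidHom.mem_ker, map_commutatorElement])

private noncomputable def pB : FPComm H K →* B' :=
  QuotientGroup.lift _ (Coprod.lift 1 (MonoidHom.id B')) (by
    intro x hx
    refine (Subgroup.normalClosure_le_normal ?_ hx :
      x ∈ (Coprod.lift 1 (MonoidHom.id B')).ker)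
    rintro _ ⟨h, hh, k, hk, rfl⟩
    simp [MonoidHom.mem_ker, map_commutatorElement])

private lemma pA_ia (a : A') : pA H K (iaFP H K a) = a := by
  simp [pA, iaFP]

private lemma pA_ib (b : B') : pA H K (ibFP H K b) = 1 := by
  simp [pA, ibFP]

private lemma pB_ia (a : A') : pB H K (iaFP H K a) = 1 := by
  simp [pB, iaFP]

private lemma pB_ib (b : B') : pB H K (ibFP H K b) = b := by
  simp [pB, ibFP]

private lemma ia_injective : Function.Injective (iaFP H K) :=
  Function.LeftInverse.injective (g := pA H K) (pA_ia H K)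

private lemma ib_injective : Function.Injective (ibFP H K) :=
  Function.LeftInverse.injective (g := pB H K) (pB_ib H K)

private lemma uMap_injective : Function.Injective (uMap H K) := by
  intro x y hxy
  have h1 : (x.1 : A') = y.1 := by
    have := congrArg (pA H K) hxy
    simpa [uMap_apply, pA_ia, pA_ib] using this
  have h2 : (x.2 : B') = y.2 := by
    have := congrArg (pB H K) hxy
    simpa [uMap_apply, pB_ia, pB_ib] using this
  exact Prod.ext (Subtype.ext h1) (Subtype.ext h2)

/-- `U ≅ H × K`. -/
private noncomputable def eU : (↥H × ↥K) ≃* ↥(Usub H K) :=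
  MulEquiv.ofBijective ((uMap H K).codRestrict (Usub H K) (uMap_mem H K))
    ⟨fun x y hxy => uMap_injective H K (congrArg Subtype.val hxy),
     fun u => by
      have : (u : FPComm H K) ∈ (uMap H K).range := (range_uMap H K).symm ▸ u.2
      obtain ⟨x, hx⟩ := this
      exact ⟨x, Subtype.ext hx⟩⟩

private lemma coe_eU (x : ↥H × ↥K) : ((eU H K x : ↥(Usub H K)) : FPComm H K) = uMap H K x := rfl

end Aux1

section Aux2

universe u v
variable {A' : Type u} {B' : Type v} [Group A'] [Group B'] (H : Subgroup A') (K : Subgroup B')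

private def famM : Bool → Type (max u v)
  | true => ULift.{v} A'
  | false => ↥H × ↥K

private instance (b : Bool) : Group (famM H K b) :=
  match b with
  | true => inferInstanceAs (Group (ULift.{v} A'))
  | false => inferInstanceAs (Group (↥H × ↥K))

private def phiM : ∀ b : Bool, ↥H →* famM H K b
  | true => (MulEquiv.ulift.symm.toMonoidHom).comp H.subtype
  | false => MonoidHom.inl ↥H ↥K

private lemma phiM_injective : ∀ b : Bool, Function.Injective (phiM H K b)
  | true => MulEquiv.ulift.symm.injective.comp H.subtype_injective
  | false => fun x y hxy => congrArg Prod.fst hxy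

private def famN : Bool → Type (max u v)
  | true => ULift.{u} B'
  | false => ↥H × ↥K

private instance (b : Bool) : Group (famN H K b) :=
  match b with
  | true => inferInstanceAs (Group (ULift.{u} B'))
  | false => inferInstanceAs (Group (↥H × ↥K))

private def phiN : ∀ b : Bool, ↥K →* famN H K b
  | true => (MulEquiv.ulift.symm.toMonoidHom).comp K.subtype
  | false => MonoidHom.inr ↥H ↥K

private lemma phiN_injective : ∀ b : Bool, Function.Injective (phiN H K b)
  | true => MulEquiv.ulift.symm.injective.comp K.subtype_injective
  | false => fun x y hxy => congrArg Prod.snd hxy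

/-- `M₀ = A ∗_H (H × K)`. -/
private abbrev M0 : Type (max u v) := PushoutI (phiM H K)

private instance : Group (M0 H K) := inferInstanceAs (Group (PushoutI (phiM H K)))

/-- `N₀ = B ∗_K (H × K)`. -/
private abbrev N0 : Type (max u v) := PushoutI (phiN H K)

private instance : Group (N0 H K) := inferInstanceAs (Group (PushoutI (phiN H K)))

private def famG : Bool → Type (max u v)
  | true => M0 H K
  | false => N0 H K

private instance (b : Bool) : Group (famG H K b) :=
  match b with
  | true => inferInstanceAs (Group (M0 H K))
  | false => inferInstanceAs (Group (N0 H K))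

private def psiG : ∀ b : Bool, (↥H × ↥K) →* famG H K b
  | true => PushoutI.of (φ := phiM H K) false
  | false => PushoutI.of (φ := phiN H K) false

private lemma psiG_injective : ∀ b : Bool, Function.Injective (psiG H K b)
  | true => PushoutI.of_injective (phiM_injective H K) false
  | false => PushoutI.of_injective (phiN_injective H K) false

/-- `G₀ = M₀ ∗_{H×K} N₀`. -/
private abbrev G0 : Type (max u v) := PushoutI (psiG H K)

private instance : Group (G0 H K) := inferInstanceAs (Group (PushoutI (psiG H K)))

private noncomputable def jA : A' →* G0 H K :=
  (PushoutI.of (φ := psiG H K) true).comp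
    ((PushoutI.of (φ := phiM H K) true).comp MulEquiv.ulift.symm.toMonoidHom)

private noncomputable def jB : B' →* G0 H K :=
  (PushoutI.of (φ := psiG H K) false).comp
    ((PushoutI.of (φ := phiN H K) true).comp MulEquiv.ulift.symm.toMonoidHom)

private lemma jA_mem_H (h : ↥H) : jA H K h = PushoutI.base (psiG H K) (h, 1) :=
  calc jA H K h
      = PushoutI.of (φ := psiG H K) true
        (PushoutI.of (φ := phiM H K) true (phiM H K true h)) := rfl
    _ = PushoutI.of (φ := psiG H K) true (PushoutI.base (phiM H K) h) := by
        rw [PushoutI.of_apply_eq_base]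
    _ = PushoutI.of (φ := psiG H K) true
        (PushoutI.of (φ := phiM H K) false (phiM H K false h)) := by
        rw [PushoutI.of_apply_eq_base]
    _ = PushoutI.base (psiG H K) (h, 1) := PushoutI.of_apply_eq_base (psiG H K) true (h, 1)

private lemma jB_mem_K (k : ↥K) : jB H K k = PushoutI.base (psiG H K) (1, k) :=
  calc jB H K k
      = PushoutI.of (φ := psiG H K) false
        (PushoutI.of (φ := phiN H K) true (phiN H K true k)) := rfl
    _ = PushoutI.of (φ := psiG H K) false (PushoutI.base (phiN H K) k) := by
        rw [PushoutI.of_apply_eq_base]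
    _ = PushoutI.of (φ := psiG H K) false
        (PushoutI.of (φ := phiN H K) false (phiN H K false k)) := by
        rw [PushoutI.of_apply_eq_base]
    _ = PushoutI.base (psiG H K) (1, k) := PushoutI.of_apply_eq_base (psiG H K) false (1, k)

/-- The comparison map `G → G₀`. -/
private noncomputable def PhiG : FPComm H K →* G0 H K :=
  QuotientGroup.lift _ (Coprod.lift (jA H K) (jB H K)) (by
    intro x hx
    refine (Subgroup.normalClosure_le_normal ?_ hx :
      x ∈ (Coprod.lift (jA H K) (jB H K)).ker)
    rintro _ ⟨h, hh, k, hk, rfl⟩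
    rw [SetLike.mem_coe, MonoidHom.mem_ker, map_commutatorElement]
    simp only [Coprod.lift_apply_inl, Coprod.lift_apply_inr]
    rw [jA_mem_H H K ⟨h, hh⟩, jB_mem_K H K ⟨k, hk⟩,
      commutatorElement_eq_one_iff_mul_comm]
    have hcomm : ((⟨h, hh⟩, 1) : ↥H × ↥K) * (1, ⟨k, hk⟩) = (1, ⟨k, hk⟩) * (⟨h, hh⟩, 1) := by
      simp [Prod.ext_iff]
    exact (map_mul (PushoutI.base (psiG H K)) _ _).symm.trans
      ((congrArg _ hcomm).trans (map_mul (PushoutI.base (psiG H K)) _ _)))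

private lemma PhiG_ia (a : A') : PhiG H K (iaFP H K a) = jA H K a := by
  simp [PhiG, iaFP]

private lemma PhiG_ib (b : B') : PhiG H K (ibFP H K b) = jB H K b := by
  simp [PhiG, ibFP]

end Aux2

section Aux3

universe u v
variable {A' : Type u} {B' : Type v} [Group A'] [Group B'] (H : Subgroup A') (K : Subgroup B')

private noncomputable def fM : ∀ b : Bool, famM H K b →* FPComm H K
  | true => (iaFP H K).comp MulEquiv.ulift.toMonoidHom
  | false => uMap H K

private lemma fM_compat : ∀ b : Bool, (fM H K b).comp (phiM H K b) = (iaFP H K).comp H.subtype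
  | true => rfl
  | false => by
      ext h
      show uMap H K (h, 1) = iaFP H K h
      rw [uMap_apply]
      simp

/-- `θM : M₀ → G`. -/
private noncomputable def thM : M0 H K →* FPComm H K :=
  PushoutI.lift (fM H K) ((iaFP H K).comp H.subtype) (fM_compat H K)

private lemma thM_of (b : Bool) (x : famM H K b) :
    thM H K (PushoutI.of (φ := phiM H K) b x) = fM H K b x :=
  PushoutI.lift_of (fM H K) ((iaFP H K).comp H.subtype) (fM_compat H K) x

private lemma thM_of_true (a : A') :
    thM H K (PushoutI.of (φ := phiM H K) true (ULift.up a)) = iaFP H K a :=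
  thM_of H K true (ULift.up a)

private lemma thM_of_false (x : ↥H × ↥K) :
    thM H K (PushoutI.of (φ := phiM H K) false x) = uMap H K x :=
  thM_of H K false x

private noncomputable def fN : ∀ b : Bool, famN H K b →* FPComm H K
  | true => (ibFP H K).comp MulEquiv.ulift.toMonoidHom
  | false => uMap H K

private lemma fN_compat : ∀ b : Bool, (fN H K b).comp (phiN H K b) = (ibFP H K).comp K.subtype
  | true => rfl
  | false => by
      ext k
      show uMap H K (1, k) = ibFP H K k
      rw [uMap_apply]
      simp

/-- `θN : N₀ → G`. -/
private noncomputable def thN : N0 H K →* FPComm H K :=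
  PushoutI.lift (fN H K) ((ibFP H K).comp K.subtype) (fN_compat H K)

private lemma thN_of (b : Bool) (x : famN H K b) :
    thN H K (PushoutI.of (φ := phiN H K) b x) = fN H K b x :=
  PushoutI.lift_of (fN H K) ((ibFP H K).comp K.subtype) (fN_compat H K) x

private lemma thN_of_true (b : B') :
    thN H K (PushoutI.of (φ := phiN H K) true (ULift.up b)) = ibFP H K b :=
  thN_of H K true (ULift.up b)

private lemma thN_of_false (x : ↥H × ↥K) :
    thN H K (PushoutI.of (φ := phiN H K) false x) = uMap H K x :=
  thN_of H K false x

private lemma PhiG_comp_thM :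
    (PhiG H K).comp (thM H K) = PushoutI.of (φ := psiG H K) true := by
  refine PushoutI.hom_ext_nonempty fun b => ?_
  cases b with
  | true =>
    ext x
    show PhiG H K (thM H K (PushoutI.of true (ULift.up x.down))) =
      PushoutI.of true (PushoutI.of (φ := phiM H K) true (ULift.up x.down))
    rw [thM_of_true, PhiG_ia]
    rfl
  | false =>
    ext x
    change ↥H × ↥K at x
    show PhiG H K (thM H K (PushoutI.of false x)) = PushoutI.of true (psiG H K true x)
    rw [thM_of_false, uMap_apply, map_mul, PhiG_ia, PhiG_ib, jA_mem_H, jB_mem_K,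
      PushoutI.of_apply_eq_base (psiG H K) true x]
    exact (map_mul (PushoutI.base (psiG H K)) _ _).symm.trans
      (congrArg _ (by simp [Prod.ext_iff]))

private lemma PhiG_comp_thN :
    (PhiG H K).comp (thN H K) = PushoutI.of (φ := psiG H K) false := by
  refine PushoutI.hom_ext_nonempty fun b => ?_
  cases b with
  | true =>
    ext x
    show PhiG H K (thN H K (PushoutI.of true (ULift.up x.down))) =
      PushoutI.of false (PushoutI.of (φ := phiN H K) true (ULift.up x.down))
    rw [thN_of_true, PhiG_ib]
    rfl
  | false =>
    ext x
    change ↥H × ↥K at x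
    show PhiG H K (thN H K (PushoutI.of false x)) = PushoutI.of false (psiG H K false x)
    rw [thN_of_false, uMap_apply, map_mul, PhiG_ia, PhiG_ib, jA_mem_H, jB_mem_K,
      PushoutI.of_apply_eq_base (psiG H K) false x]
    exact (map_mul (PushoutI.base (psiG H K)) _ _).symm.trans
      (congrArg _ (by simp [Prod.ext_iff]))

private lemma thM_injective : Function.Injective (thM H K) := by
  intro x y hxy
  refine PushoutI.of_injective (psiG_injective H K) true ?_
  have h1 := congrArg (PhiG H K) hxy
  rwa [← MonoidHom.comp_apply, ← MonoidHom.comp_apply, PhiG_comp_thM] at h1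

private lemma thN_injective : Function.Injective (thN H K) := by
  intro x y hxy
  refine PushoutI.of_injective (psiG_injective H K) false ?_
  have h1 := congrArg (PhiG H K) hxy
  rwa [← MonoidHom.comp_apply, ← MonoidHom.comp_apply, PhiG_comp_thN] at h1

private lemma thM_mem (x : M0 H K) : thM H K x ∈ Msub H K := by
  induction x using PushoutI.induction_on with
  | of b g =>
    cases b with
    | true =>
      have : g = ULift.up g.down := rfl
      rw [this, thM_of_true]
      exact Subgroup.mem_sup_left ⟨g.down, rfl⟩
    | false =>
      erw [thM_of_false]
      exact Subgroup.mem_sup_right (uMap_mem H K g)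
  | base h =>
    have : thM H K (PushoutI.base (phiM H K) h) = iaFP H K h :=
      PushoutI.lift_base (fM H K) ((iaFP H K).comp H.subtype) (fM_compat H K) h
    rw [this]
    exact Subgroup.mem_sup_left ⟨h, rfl⟩
  | mul x y hx hy =>
    rw [map_mul]
    exact mul_mem hx hy

private lemma thN_mem (x : N0 H K) : thN H K x ∈ Nsub H K := by
  induction x using PushoutI.induction_on with
  | of b g =>
    cases b with
    | true =>
      have : g = ULift.up g.down := rfl
      rw [this, thN_of_true]
      exact Subgroup.mem_sup_left ⟨g.down, rfl⟩
    | false =>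
      erw [thN_of_false]
      exact Subgroup.mem_sup_right (uMap_mem H K g)
  | base h =>
    have : thN H K (PushoutI.base (phiN H K) h) = ibFP H K h :=
      PushoutI.lift_base (fN H K) ((ibFP H K).comp K.subtype) (fN_compat H K) h
    rw [this]
    exact Subgroup.mem_sup_left ⟨h, rfl⟩
  | mul x y hx hy =>
    rw [map_mul]
    exact mul_mem hx hy

private lemma Msub_le_range : Msub H K ≤ (thM H K).range := by
  refine sup_le ?_ ?_
  · rintro _ ⟨a, rfl⟩
    exact ⟨PushoutI.of (φ := phiM H K) true (ULift.up a), thM_of_true H K a⟩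
  · rw [← range_uMap]
    rintro _ ⟨x, rfl⟩
    exact ⟨PushoutI.of (φ := phiM H K) false x, thM_of_false H K x⟩

private lemma Nsub_le_range : Nsub H K ≤ (thN H K).range := by
  refine sup_le ?_ ?_
  · rintro _ ⟨b, rfl⟩
    exact ⟨PushoutI.of (φ := phiN H K) true (ULift.up b), thN_of_true H K b⟩
  · rw [← range_uMap]
    rintro _ ⟨x, rfl⟩
    exact ⟨PushoutI.of (φ := phiN H K) false x, thN_of_false H K x⟩

/-- `M ≅ M₀`. -/
private noncomputable def eM : M0 H K ≃* ↥(Msub H K) :=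
  MulEquiv.ofBijective ((thM H K).codRestrict (Msub H K) (thM_mem H K))
    ⟨fun x y hxy => thM_injective H K (congrArg Subtype.val hxy),
     fun m => by
      obtain ⟨x, hx⟩ := Msub_le_range H K m.2
      exact ⟨x, Subtype.ext hx⟩⟩

private lemma coe_eM (x : M0 H K) : ((eM H K x : ↥(Msub H K)) : FPComm H K) = thM H K x := rfl

/-- `N ≅ N₀`. -/
private noncomputable def eN : N0 H K ≃* ↥(Nsub H K) :=
  MulEquiv.ofBijective ((thN H K).codRestrict (Nsub H K) (thN_mem H K))
    ⟨fun x y hxy => thN_injective H K (congrArg Subtype.val hxy),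
     fun m => by
      obtain ⟨x, hx⟩ := Nsub_le_range H K m.2
      exact ⟨x, Subtype.ext hx⟩⟩

private lemma coe_eN (x : N0 H K) : ((eN H K x : ↥(Nsub H K)) : FPComm H K) = thN H K x := rfl

end Aux3

section AuxExt

private lemma supHomExt {G : Type*} [Group G] {P : Type*} [Group P] (S T : Subgroup G)
    (f g : ↥(S ⊔ T) →* P)
    (hS : ∀ x (hx : x ∈ S), f ⟨x, Subgroup.mem_sup_left hx⟩ = g ⟨x, Subgroup.mem_sup_left hx⟩)
    (hT : ∀ x (hx : x ∈ T), f ⟨x, Subgroup.mem_sup_right hx⟩ = g ⟨x, Subgroup.mem_sup_right hx⟩) :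
    f = g := by
  have key : ∀ x (hx : x ∈ Subgroup.closure ((S : Set G) ∪ (T : Set G)))
      (hm : x ∈ S ⊔ T), f ⟨x, hm⟩ = g ⟨x, hm⟩ := by
    intro x hx
    refine Subgroup.closure_induction
      (p := fun y _ => ∀ hm : y ∈ S ⊔ T, f ⟨y, hm⟩ = g ⟨y, hm⟩) ?_ ?_ ?_ ?_ hx
    · rintro y (hy | hy) hm
      · exact hS y hy
      · exact hT y hy
    · intro hm
      have h1 : (⟨1, hm⟩ : ↥(S ⊔ T)) = 1 := rfl
      rw [h1, map_one, map_one]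
    · intro y z hy hz hfy hfz hm
      have hy' : y ∈ S ⊔ T := by rwa [Subgroup.sup_eq_closure]
      have hz' : z ∈ S ⊔ T := by rwa [Subgroup.sup_eq_closure]
      have h1 : (⟨y * z, hm⟩ : ↥(S ⊔ T)) = ⟨y, hy'⟩ * ⟨z, hz'⟩ := rfl
      rw [h1, map_mul, map_mul, hfy hy', hfz hz']
    · intro y hy hfy hm
      have hy' : y ∈ S ⊔ T := by rwa [Subgroup.sup_eq_closure]
      have h1 : (⟨y⁻¹, hm⟩ : ↥(S ⊔ T)) = (⟨y, hy'⟩ : ↥(S ⊔ T))⁻¹ := rfl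
      rw [h1, map_inv, map_inv, hfy hy']
  ext ⟨x, hx⟩
  exact key x (by rwa [← Subgroup.sup_eq_closure]) hx

end AuxExt

section Aux4

universe u v w
variable {A' : Type u} {B' : Type v} [Group A'] [Group B'] (H : Subgroup A') (K : Subgroup B')
variable {P : Type w} [Group P]

private lemma fpHomExt (f g : FPComm H K →* P)
    (hA : ∀ a, f (iaFP H K a) = g (iaFP H K a))
    (hB : ∀ b, f (ibFP H K b) = g (ibFP H K b)) : f = g := by
  have h1 : f.comp (QuotientGroup.mk' _) = g.comp (QuotientGroup.mk' _) :=
    Coprod.hom_ext (MonoidHom.ext hA) (MonoidHom.ext hB)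
  refine MonoidHom.ext fun x => ?_
  refine QuotientGroup.induction_on x fun z => ?_
  exact DFunLike.congr_fun h1 z

/-- `M`-side universal property: the hypothesis. -/
private noncomputable def fMP (f : A' →* P) (g : ↥(Usub H K) →* P) :
    ∀ b : Bool, famM H K b →* P
  | true => f.comp MulEquiv.ulift.toMonoidHom
  | false => g.comp (eU H K).toMonoidHom

private lemma fMP_compat (f : A' →* P) (g : ↥(Usub H K) →* P)
    (hfg : ∀ h : ↥H, f h =
      g ⟨iaFP H K h, Subgroup.mem_sup_left (Subgroup.mem_map_of_mem _ h.2)⟩) :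
    ∀ b : Bool, (fMP H K f g b).comp (phiM H K b) = f.comp H.subtype
  | true => rfl
  | false => by
      ext h
      show g (eU H K (h, 1)) = f h
      have h1 : eU H K (h, 1) =
          ⟨iaFP H K h, Subgroup.mem_sup_left (Subgroup.mem_map_of_mem _ h.2)⟩ := by
        apply Subtype.ext
        rw [coe_eU, uMap_apply]
        simp
      rw [h1]
      exact (hfg h).symm

private noncomputable def mLift (f : A' →* P) (g : ↥(Usub H K) →* P)
    (hfg : ∀ h : ↥H, f h =
      g ⟨iaFP H K h, Subgroup.mem_sup_left (Subgroup.mem_map_of_mem _ h.2)⟩) :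
    ↥(Msub H K) →* P :=
  (PushoutI.lift (fMP H K f g) (f.comp H.subtype) (fMP_compat H K f g hfg)).comp
    (eM H K).symm.toMonoidHom

private lemma mLift_of (f : A' →* P) (g : ↥(Usub H K) →* P) (hfg) (b : Bool) (x : famM H K b) :
    PushoutI.lift (fMP H K f g) (f.comp H.subtype) (fMP_compat H K f g hfg)
      (PushoutI.of (φ := phiM H K) b x) = fMP H K f g b x :=
  PushoutI.lift_of _ _ _ x

private lemma mLift_a (f : A' →* P) (g : ↥(Usub H K) →* P) (hfg) (a : A') :
    mLift H K f g hfg ⟨iaFP H K a, Subgroup.mem_sup_left ⟨a, rfl⟩⟩ = f a := by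
  have h1 : eM H K (PushoutI.of (φ := phiM H K) true (ULift.up a)) =
      ⟨iaFP H K a, Subgroup.mem_sup_left ⟨a, rfl⟩⟩ :=
    Subtype.ext (thM_of_true H K a)
  have h2 : (eM H K).symm ⟨iaFP H K a, Subgroup.mem_sup_left ⟨a, rfl⟩⟩ =
      PushoutI.of (φ := phiM H K) true (ULift.up a) := by
    rw [← h1, MulEquiv.symm_apply_apply]
  unfold mLift
  rw [MonoidHom.comp_apply]
  erw [h2]
  exact mLift_of H K f g hfg true (ULift.up a)

private lemma mLift_u (f : A' →* P) (g : ↥(Usub H K) →* P) (hfg) (u : ↥(Usub H K)) :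
    mLift H K f g hfg ⟨(u : FPComm H K), Subgroup.mem_sup_right u.2⟩ = g u := by
  have h1 : eM H K (PushoutI.of (φ := phiM H K) false ((eU H K).symm u)) =
      ⟨(u : FPComm H K), Subgroup.mem_sup_right u.2⟩ := by
    apply Subtype.ext
    show thM H K (PushoutI.of (φ := phiM H K) false ((eU H K).symm u)) = (u : FPComm H K)
    rw [thM_of_false, ← coe_eU, MulEquiv.apply_symm_apply]
  have h2 : (eM H K).symm ⟨(u : FPComm H K), Subgroup.mem_sup_right u.2⟩ =
      PushoutI.of (φ := phiM H K) false ((eU H K).symm u) := by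
    rw [← h1, MulEquiv.symm_apply_apply]
  unfold mLift
  rw [MonoidHom.comp_apply]
  erw [h2]
  have h3 := mLift_of H K f g hfg false ((eU H K).symm u)
  rw [h3]
  show g (eU H K ((eU H K).symm u)) = g u
  rw [MulEquiv.apply_symm_apply]

private lemma mHomExt (φ₁ φ₂ : ↥(Msub H K) →* P)
    (ha : ∀ a : A', φ₁ ⟨iaFP H K a, Subgroup.mem_sup_left ⟨a, rfl⟩⟩ =
      φ₂ ⟨iaFP H K a, Subgroup.mem_sup_left ⟨a, rfl⟩⟩)
    (hu : ∀ u : ↥(Usub H K), φ₁ ⟨(u : FPComm H K), Subgroup.mem_sup_right u.2⟩ =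
      φ₂ ⟨(u : FPComm H K), Subgroup.mem_sup_right u.2⟩) : φ₁ = φ₂ := by
  refine supHomExt (iaFP H K).range (Usub H K) φ₁ φ₂ ?_ ?_
  · rintro _ ⟨a, rfl⟩
    exact ha a
  · intro x hx
    exact hu ⟨x, hx⟩

/-- `N`-side analogues. -/
private noncomputable def fNP (f : B' →* P) (g : ↥(Usub H K) →* P) :
    ∀ b : Bool, famN H K b →* P
  | true => f.comp MulEquiv.ulift.toMonoidHom
  | false => g.comp (eU H K).toMonoidHom

private lemma fNP_compat (f : B' →* P) (g : ↥(Usub H K) →* P)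
    (hfg : ∀ k : ↥K, f k =
      g ⟨ibFP H K k, Subgroup.mem_sup_right (Subgroup.mem_map_of_mem _ k.2)⟩) :
    ∀ b : Bool, (fNP H K f g b).comp (phiN H K b) = f.comp K.subtype
  | true => rfl
  | false => by
      ext k
      show g (eU H K (1, k)) = f k
      have h1 : eU H K (1, k) =
          ⟨ibFP H K k, Subgroup.mem_sup_right (Subgroup.mem_map_of_mem _ k.2)⟩ := by
        apply Subtype.ext
        rw [coe_eU, uMap_apply]
        simp
      rw [h1]
      exact (hfg k).symm

private noncomputable def nLift (f : B' →* P) (g : ↥(Usub H K) →* P)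
    (hfg : ∀ k : ↥K, f k =
      g ⟨ibFP H K k, Subgroup.mem_sup_right (Subgroup.mem_map_of_mem _ k.2)⟩) :
    ↥(Nsub H K) →* P :=
  (PushoutI.lift (fNP H K f g) (f.comp K.subtype) (fNP_compat H K f g hfg)).comp
    (eN H K).symm.toMonoidHom

private lemma nLift_of (f : B' →* P) (g : ↥(Usub H K) →* P) (hfg) (b : Bool) (x : famN H K b) :
    PushoutI.lift (fNP H K f g) (f.comp K.subtype) (fNP_compat H K f g hfg)
      (PushoutI.of (φ := phiN H K) b x) = fNP H K f g b x :=
  PushoutI.lift_of _ _ _ x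

private lemma nLift_b (f : B' →* P) (g : ↥(Usub H K) →* P) (hfg) (b : B') :
    nLift H K f g hfg ⟨ibFP H K b, Subgroup.mem_sup_left ⟨b, rfl⟩⟩ = f b := by
  have h1 : eN H K (PushoutI.of (φ := phiN H K) true (ULift.up b)) =
      ⟨ibFP H K b, Subgroup.mem_sup_left ⟨b, rfl⟩⟩ :=
    Subtype.ext (thN_of_true H K b)
  have h2 : (eN H K).symm ⟨ibFP H K b, Subgroup.mem_sup_left ⟨b, rfl⟩⟩ =
      PushoutI.of (φ := phiN H K) true (ULift.up b) := by
    rw [← h1, MulEquiv.symm_apply_apply]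
  unfold nLift
  rw [MonoidHom.comp_apply]
  erw [h2]
  exact nLift_of H K f g hfg true (ULift.up b)

private lemma nLift_u (f : B' →* P) (g : ↥(Usub H K) →* P) (hfg) (u : ↥(Usub H K)) :
    nLift H K f g hfg ⟨(u : FPComm H K), Subgroup.mem_sup_right u.2⟩ = g u := by
  have h1 : eN H K (PushoutI.of (φ := phiN H K) false ((eU H K).symm u)) =
      ⟨(u : FPComm H K), Subgroup.mem_sup_right u.2⟩ := by
    apply Subtype.ext
    show thN H K (PushoutI.of (φ := phiN H K) false ((eU H K).symm u)) = (u : FPComm H K)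
    rw [thN_of_false, ← coe_eU, MulEquiv.apply_symm_apply]
  have h2 : (eN H K).symm ⟨(u : FPComm H K), Subgroup.mem_sup_right u.2⟩ =
      PushoutI.of (φ := phiN H K) false ((eU H K).symm u) := by
    rw [← h1, MulEquiv.symm_apply_apply]
  unfold nLift
  rw [MonoidHom.comp_apply]
  erw [h2]
  have h3 := nLift_of H K f g hfg false ((eU H K).symm u)
  rw [h3]
  show g (eU H K ((eU H K).symm u)) = g u
  rw [MulEquiv.apply_symm_apply]

private lemma nHomExt (φ₁ φ₂ : ↥(Nsub H K) →* P)
    (hb : ∀ b : B', φ₁ ⟨ibFP H K b, Subgroup.mem_sup_left ⟨b, rfl⟩⟩ =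
      φ₂ ⟨ibFP H K b, Subgroup.mem_sup_left ⟨b, rfl⟩⟩)
    (hu : ∀ u : ↥(Usub H K), φ₁ ⟨(u : FPComm H K), Subgroup.mem_sup_right u.2⟩ =
      φ₂ ⟨(u : FPComm H K), Subgroup.mem_sup_right u.2⟩) : φ₁ = φ₂ := by
  refine supHomExt (ibFP H K).range (Usub H K) φ₁ φ₂ ?_ ?_
  · rintro _ ⟨b, rfl⟩
    exact hb b
  · intro x hx
    exact hu ⟨x, hx⟩

end Aux4

section Aux5

universe u v w
variable {A' : Type u} {B' : Type v} [Group A'] [Group B'] (H : Subgroup A') (K : Subgroup B')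
variable {P : Type w} [Group P]

private noncomputable def fAmap (f : ↥(Msub H K) →* P) : A' →* P :=
  f.comp ((iaFP H K).codRestrict (Msub H K) fun a => Subgroup.mem_sup_left ⟨a, rfl⟩)

private noncomputable def fBmap (g : ↥(Nsub H K) →* P) : B' →* P :=
  g.comp ((ibFP H K).codRestrict (Nsub H K) fun b => Subgroup.mem_sup_left ⟨b, rfl⟩)

private noncomputable def gLift (f : ↥(Msub H K) →* P) (g : ↥(Nsub H K) →* P)
    (hfg : ∀ u : ↥(Usub H K),
      f ⟨(u : FPComm H K), Subgroup.mem_sup_right u.2⟩ =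
      g ⟨(u : FPComm H K), Subgroup.mem_sup_right u.2⟩) : FPComm H K →* P :=
  QuotientGroup.lift _ (Coprod.lift (fAmap H K f) (fBmap H K g))
    (by
      intro x hx
      refine (Subgroup.normalClosure_le_normal ?_ hx :
        x ∈ (Coprod.lift (fAmap H K f) (fBmap H K g)).ker)
      rintro _ ⟨h, hh, k, hk, rfl⟩
      rw [SetLike.mem_coe, MonoidHom.mem_ker, map_commutatorElement,
        commutatorElement_eq_one_iff_mul_comm]
      simp only [Coprod.lift_apply_inl, Coprod.lift_apply_inr]
      have e1 : fAmap H K f h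
          = g ⟨iaFP H K h, Subgroup.mem_sup_right
              (Subgroup.mem_sup_left (Subgroup.mem_map_of_mem _ hh))⟩ :=
        hfg ⟨iaFP H K h, Subgroup.mem_sup_left (Subgroup.mem_map_of_mem _ hh)⟩
      have e2 : fBmap H K g k
          = g ⟨ibFP H K k, Subgroup.mem_sup_left ⟨k, rfl⟩⟩ := rfl
      rw [e1, e2, ← map_mul, ← map_mul]
      exact congrArg g (Subtype.ext (comm_rel H K hh hk)))

private lemma gLift_ia (f : ↥(Msub H K) →* P) (g : ↥(Nsub H K) →* P) (hfg) (a : A') :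
    gLift H K f g hfg (iaFP H K a) = f ⟨iaFP H K a, Subgroup.mem_sup_left ⟨a, rfl⟩⟩ := by
  simp only [gLift, iaFP, MonoidHom.comp_apply, QuotientGroup.mk'_apply, QuotientGroup.lift_mk', Coprod.lift_apply_inl]
  rfl

private lemma gLift_ib (f : ↥(Msub H K) →* P) (g : ↥(Nsub H K) →* P) (hfg) (b : B') :
    gLift H K f g hfg (ibFP H K b) = g ⟨ibFP H K b, Subgroup.mem_sup_left ⟨b, rfl⟩⟩ := by
  simp only [gLift, ibFP, MonoidHom.comp_apply, QuotientGroup.mk'_apply, QuotientGroup.lift_mk', Coprod.lift_apply_inr]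
  rfl

private lemma gLift_M (f : ↥(Msub H K) →* P) (g : ↥(Nsub H K) →* P) (hfg) (m : ↥(Msub H K)) :
    gLift H K f g hfg (m : FPComm H K) = f m := by
  have key : (gLift H K f g hfg).comp (Msub H K).subtype = f := by
    refine supHomExt (iaFP H K).range (Usub H K) _ _ ?_ ?_
    · rintro _ ⟨a, rfl⟩
      exact gLift_ia H K f g hfg a
    · intro x hx
      rw [← range_uMap H K] at hx
      obtain ⟨y, rfl⟩ := hx
      have hmem : uMap H K y ∈ Usub H K := uMap_mem H K y
      show gLift H K f g hfg (uMap H K y) = f ⟨uMap H K y, Subgroup.mem_sup_right hmem⟩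
      have split : (⟨uMap H K y, Subgroup.mem_sup_right hmem⟩ : ↥(Msub H K)) =
          ⟨iaFP H K y.1, Subgroup.mem_sup_left ⟨y.1, rfl⟩⟩ *
          ⟨ibFP H K y.2, Subgroup.mem_sup_right
            (Subgroup.mem_sup_right (Subgroup.mem_map_of_mem _ y.2.2))⟩ :=
        Subtype.ext (uMap_apply H K y)
      rw [split, map_mul, uMap_apply, map_mul, gLift_ia, gLift_ib]
      congr 1
      exact (hfg ⟨ibFP H K y.2, Subgroup.mem_sup_right
        (Subgroup.mem_map_of_mem _ y.2.2)⟩).symm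
  calc gLift H K f g hfg (m : FPComm H K)
      = (gLift H K f g hfg).comp (Msub H K).subtype m := rfl
    _ = f m := by rw [key]

private lemma gLift_N (f : ↥(Msub H K) →* P) (g : ↥(Nsub H K) →* P) (hfg) (n : ↥(Nsub H K)) :
    gLift H K f g hfg (n : FPComm H K) = g n := by
  have key : (gLift H K f g hfg).comp (Nsub H K).subtype = g := by
    refine supHomExt (ibFP H K).range (Usub H K) _ _ ?_ ?_
    · rintro _ ⟨b, rfl⟩
      exact gLift_ib H K f g hfg b
    · intro x hx
      rw [← range_uMap H K] at hx
      obtain ⟨y, rfl⟩ := hx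
      have hmem : uMap H K y ∈ Usub H K := uMap_mem H K y
      show gLift H K f g hfg (uMap H K y) = g ⟨uMap H K y, Subgroup.mem_sup_right hmem⟩
      have split : (⟨uMap H K y, Subgroup.mem_sup_right hmem⟩ : ↥(Nsub H K)) =
          ⟨iaFP H K y.1, Subgroup.mem_sup_right
            (Subgroup.mem_sup_left (Subgroup.mem_map_of_mem _ y.1.2))⟩ *
          ⟨ibFP H K y.2, Subgroup.mem_sup_left ⟨y.2, rfl⟩⟩ :=
        Subtype.ext (uMap_apply H K y)
      rw [split, map_mul, uMap_apply, map_mul, gLift_ia, gLift_ib]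
      congr 1
      exact hfg ⟨iaFP H K y.1, Subgroup.mem_sup_left
        (Subgroup.mem_map_of_mem _ y.1.2)⟩
  calc gLift H K f g hfg (n : FPComm H K)
      = (gLift H K f g hfg).comp (Nsub H K).subtype n := rfl
    _ = g n := by rw [key]

end Aux5


/-- Structure of `G = ⟨A * B; [H,K] = 1⟩`: `U = HK` is the direct product `H × K`;
`M = ⟨A, U⟩` is the amalgamated product of `A` and `U` over `H` (expressed by the
universal property of the pushout); `N = ⟨B, U⟩` is the amalgamated product of `B`
and `U` over `K`; and `G` is the amalgamated product of `M` and `N` over `U`. -/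
theorem fpComm_structure (H : Subgroup A) (K : Subgroup B) :
    -- U ≅ H × K, compatibly with the embeddings of H and K
    (∃ e : (↥H × ↥K) ≃* ↥(Usub H K),
      (∀ h : ↥H, ((e (h, 1) : ↥(Usub H K)) : FPComm H K) = iaFP H K h) ∧
      (∀ k : ↥K, ((e (1, k) : ↥(Usub H K)) : FPComm H K) = ibFP H K k)) ∧
    -- M = ⟨A * U; H⟩ : universal property of the pushout of A ← H → U
    (∀ (P : Type*) [Group P] (f : A →* P) (g : ↥(Usub H K) →* P),
      (∀ h : ↥H, f h =
          g ⟨iaFP H K h, Subgroup.mem_sup_left (Subgroup.mem_map_of_mem _ h.2)⟩) →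
      ∃! φ : ↥(Msub H K) →* P,
        (∀ a : A, φ ⟨iaFP H K a, Subgroup.mem_sup_left ⟨a, rfl⟩⟩ = f a) ∧
        (∀ u : ↥(Usub H K), φ ⟨(u : FPComm H K), Subgroup.mem_sup_right u.2⟩ = g u)) ∧
    -- N = ⟨B * U; K⟩
    (∀ (P : Type*) [Group P] (f : B →* P) (g : ↥(Usub H K) →* P),
      (∀ k : ↥K, f k =
          g ⟨ibFP H K k, Subgroup.mem_sup_right (Subgroup.mem_map_of_mem _ k.2)⟩) →
      ∃! φ : ↥(Nsub H K) →* P,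
        (∀ b : B, φ ⟨ibFP H K b, Subgroup.mem_sup_left ⟨b, rfl⟩⟩ = f b) ∧
        (∀ u : ↥(Usub H K), φ ⟨(u : FPComm H K), Subgroup.mem_sup_right u.2⟩ = g u)) ∧
    -- G = ⟨M * N; U⟩
    (∀ (P : Type*) [Group P] (f : ↥(Msub H K) →* P) (g : ↥(Nsub H K) →* P),
      (∀ u : ↥(Usub H K),
          f ⟨(u : FPComm H K), Subgroup.mem_sup_right u.2⟩ =
          g ⟨(u : FPComm H K), Subgroup.mem_sup_right u.2⟩) →
      ∃! φ : FPComm H K →* P,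
        (∀ m : ↥(Msub H K), φ (m : FPComm H K) = f m) ∧
        (∀ n : ↥(Nsub H K), φ (n : FPComm H K) = g n)) := by
  refine ⟨⟨eU H K, fun h => ?_, fun k => ?_⟩, ?_, ?_, ?_⟩
  · rw [coe_eU, uMap_apply]
    simp
  · rw [coe_eU, uMap_apply]
    simp
  · intro P _ f g hfg
    exact ⟨mLift H K f g hfg, ⟨mLift_a H K f g hfg, mLift_u H K f g hfg⟩,
      fun φ' hφ' => mHomExt H K φ' (mLift H K f g hfg)
        (fun a => (hφ'.1 a).trans (mLift_a H K f g hfg a).symm)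
        (fun u => (hφ'.2 u).trans (mLift_u H K f g hfg u).symm)⟩
  · intro P _ f g hfg
    exact ⟨nLift H K f g hfg, ⟨nLift_b H K f g hfg, nLift_u H K f g hfg⟩,
      fun φ' hφ' => nHomExt H K φ' (nLift H K f g hfg)
        (fun b => (hφ'.1 b).trans (nLift_b H K f g hfg b).symm)
        (fun u => (hφ'.2 u).trans (nLift_u H K f g hfg u).symm)⟩
  · intro P _ f g hfg
    refine ⟨gLift H K f g hfg, ⟨fun m => gLift_M H K f g hfg m, fun n => gLift_N H K f g hfg n⟩,
      ?_⟩
    rintro φ' ⟨h1, h2⟩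
    refine fpHomExt H K φ' (gLift H K f g hfg) (fun a => ?_) (fun b => ?_)
    · exact (h1 ⟨iaFP H K a, Subgroup.mem_sup_left ⟨a, rfl⟩⟩).trans
        (gLift_M H K f g hfg ⟨iaFP H K a, Subgroup.mem_sup_left ⟨a, rfl⟩⟩).symm
    · exact (h2 ⟨ibFP H K b, Subgroup.mem_sup_left ⟨b, rfl⟩⟩).trans
        (gLift_N H K f g hfg ⟨ibFP H K b, Subgroup.mem_sup_left ⟨b, rfl⟩⟩).symm
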